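/- Let n be a positive integer, A an n×n real matrix with nonnegative entries, D the diagonal matrix with D_{ii} = Σ_{j=1}^n A_{ij}, and L = D − A. Then for any indices i and j, the entry ω_{ij} of Ω = (I + L)^{-1} is strictly positive if and only if there exists a nonnegative integer k such that (A^k)_{ij} > 0 (equivalently, i = j or there is a directed path of positive-weight arcs from i to j); otherwise ω_{ij} = 0. -/

import Mathlib

open Matrix

/-- An entry `ω_{ij}` of `Ω = (I + L)⁻¹` is strictly positive iff there is some `k ≥ 0` with
`(A^k)_{ij} > 0` (i.e. `i = j` or there is a directed path of positive-weight arcs from `i`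
to `j`); otherwise `ω_{ij} = 0`. -/
theorem stmt_13 (n : ℕ) (hn : 0 < n) (A : Matrix (Fin n) (Fin n) ℝ)
    (hA : ∀ i j, 0 ≤ A i j)
    (D : Matrix (Fin n) (Fin n) ℝ) (hD : D = Matrix.diagonal (fun i => ∑ j, A i j))
    (L : Matrix (Fin n) (Fin n) ℝ) (hL : L = D - A) :
    ∀ i j, (0 < (1 + L)⁻¹ i j ↔ ∃ k : ℕ, 0 < (A ^ k) i j) ∧
      ((¬ ∃ k : ℕ, 0 < (A ^ k) i j) → (1 + L)⁻¹ i j = 0) := by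
  classical
  letI : SeminormedRing (Matrix (Fin n) (Fin n) ℝ) := Matrix.linftyOpSemiNormedRing
  letI : NormedRing (Matrix (Fin n) (Fin n) ℝ) := Matrix.linftyOpNormedRing
  letI : NormedAlgebra ℝ (Matrix (Fin n) (Fin n) ℝ) := Matrix.linftyOpNormedAlgebra
  set d : Fin n → ℝ := fun i => ∑ j, A i j with hddef
  have hd0 : ∀ i, 0 ≤ d i := fun i => Finset.sum_nonneg fun j _ => hA i j
  have hm : ∀ i, (0 : ℝ) < 1 + d i := fun i => by linarith [hd0 i]
  set B : Matrix (Fin n) (Fin n) ℝ := Matrix.of (fun i j => (1 + d i)⁻¹ * A i j) with hBdef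
  have hB0 : ∀ i j, 0 ≤ B i j := fun i j => mul_nonneg (inv_nonneg.2 (hm i).le) (hA i j)
  have hBA : ∀ i j, (0 < B i j ↔ 0 < A i j) := fun i j =>
    mul_pos_iff_of_pos_left (inv_pos.2 (hm i))
  -- positivity pattern of powers of B matches that of A
  have hpow : ∀ k : ℕ, (∀ i j, 0 ≤ (B ^ k) i j) ∧ (∀ i j, 0 ≤ (A ^ k) i j) ∧
      (∀ i j, (0 < (B ^ k) i j ↔ 0 < (A ^ k) i j)) := by
    intro k
    induction k with
    | zero =>
      simp only [pow_zero]
      refine ⟨?_, ?_, ?_⟩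
      · intro i j; by_cases h : i = j <;> simp [Matrix.one_apply, h]
      · intro i j; by_cases h : i = j <;> simp [Matrix.one_apply, h]
      · intro i j; tauto
    | succ k ih =>
      obtain ⟨ih0, hA0, ihp⟩ := ih
      have hmul : ∀ x y : ℝ, 0 ≤ x → 0 ≤ y → (0 < x * y ↔ 0 < x ∧ 0 < y) := by
        intro x y hx hy
        rw [mul_pos_iff]
        constructor
        · rintro (h | ⟨h1, h2⟩)
          · exact h
          · exact absurd h1 (not_lt.2 hx)
        · exact Or.inl
      refine ⟨?_, ?_, ?_⟩
      · intro i j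
        rw [pow_succ, Matrix.mul_apply]
        exact Finset.sum_nonneg fun l _ => mul_nonneg (ih0 i l) (hB0 l j)
      · intro i j
        rw [pow_succ, Matrix.mul_apply]
        exact Finset.sum_nonneg fun l _ => mul_nonneg (hA0 i l) (hA l j)
      · intro i j
        rw [pow_succ, pow_succ, Matrix.mul_apply, Matrix.mul_apply]
        constructor
        · intro h
          obtain ⟨l, _, h1⟩ := Finset.exists_lt_of_sum_lt (by simpa using h :
            ∑ l, (0 : ℝ) < ∑ l, (B ^ k) i l * B l j)
          rw [hmul _ _ (ih0 i l) (hB0 l j)] at h1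
          apply Finset.sum_pos' (fun l _ => mul_nonneg (hA0 i l) (hA l j))
          exact ⟨l, Finset.mem_univ l, mul_pos ((ihp i l).mp h1.1) ((hBA l j).mp h1.2)⟩
        · intro h
          obtain ⟨l, _, h1⟩ := Finset.exists_lt_of_sum_lt (by simpa using h :
            ∑ l, (0 : ℝ) < ∑ l, (A ^ k) i l * A l j)
          rw [hmul _ _ (hA0 i l) (hA l j)] at h1
          apply Finset.sum_pos' (fun l _ => mul_nonneg (ih0 i l) (hB0 l j))
          exact ⟨l, Finset.mem_univ l, mul_pos ((ihp i l).mpr h1.1) ((hBA l j).mpr h1.2)⟩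
  -- norm of B is < 1
  have hnorm : ‖B‖ < 1 := by
    have h1 : ‖B‖₊ < 1 := by
      rw [Matrix.linfty_opNNNorm_def]
      rw [Finset.sup_lt_iff (by norm_num : (⊥ : NNReal) < 1)]
      intro i _
      have : ((∑ j, ‖B i j‖₊ : NNReal) : ℝ) < 1 := by
        push_cast
        have : ∀ j, (‖B i j‖ : ℝ) = (1 + d i)⁻¹ * A i j := fun j => by
          rw [Real.norm_eq_abs, abs_of_nonneg (hB0 i j)]; rfl
        rw [Finset.sum_congr rfl fun j _ => this j, ← Finset.mul_sum]
        rw [inv_mul_lt_iff₀ (hm i), mul_one]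
        exact (by linarith [hd0 i] : d i < 1 + d i)
      exact_mod_cast this
    calc ‖B‖ = (‖B‖₊ : ℝ) := (coe_nnnorm _).symm
    _ < 1 := by exact_mod_cast h1
  have hs : Summable (fun k : ℕ => B ^ k) := summable_geometric_of_norm_lt_one hnorm
  -- factorization 1 + L = M * (1 - B)
  have hfact : (1 : Matrix (Fin n) (Fin n) ℝ) + L =
      (Matrix.diagonal fun i => 1 + d i) * (1 - B) := by
    rw [hL, hD]
    ext i j
    rw [Matrix.diagonal_mul]
    simp only [Matrix.sub_apply, Matrix.add_apply, Matrix.one_apply, Matrix.diagonal_apply,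
      hBdef, Matrix.of_apply, mul_sub]
    have : (1 + d i) * ((1 + d i)⁻¹ * A i j) = A i j := by
      rw [← mul_assoc, mul_inv_cancel₀ (hm i).ne', one_mul]
    rw [this]
    by_cases h : i = j <;> simp [h] <;> ring
  -- the inverse
  have hdiaginv : (Matrix.diagonal fun i => 1 + d i)⁻¹ =
      Matrix.diagonal fun i => (1 + d i)⁻¹ := by
    apply Matrix.inv_eq_right_inv
    rw [Matrix.diagonal_mul_diagonal,
      show (fun i => (1 + d i) * (1 + d i)⁻¹) = fun _ : Fin n => (1 : ℝ) from
        funext fun i => mul_inv_cancel₀ (hm i).ne', Matrix.diagonal_one]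
  have hinv : (1 + L)⁻¹ = (∑' k : ℕ, B ^ k) * Matrix.diagonal fun i => (1 + d i)⁻¹ := by
    rw [hfact, Matrix.mul_inv_rev, hdiaginv,
      Matrix.nonsing_inv_eq_ringInverse, ← geom_series_eq_inverse B hnorm]
    rfl
  intro i j
  -- entry evaluation as a continuous linear map
  have hentry : ∀ X : Matrix (Fin n) (Fin n) ℝ, ‖X i j‖ ≤ ‖X‖ := by
    intro X
    have : ‖X i j‖₊ ≤ ‖X‖₊ := by
      rw [Matrix.linfty_opNNNorm_def]
      calc ‖X i j‖₊ ≤ ∑ j', ‖X i j'‖₊ :=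
        Finset.single_le_sum (f := fun j' => ‖X i j'‖₊) (fun _ _ => zero_le) (Finset.mem_univ j)
      _ ≤ _ := Finset.le_sup (f := fun i => ∑ j', ‖X i j'‖₊) (Finset.mem_univ i)
    exact_mod_cast this
  let φ : Matrix (Fin n) (Fin n) ℝ →L[ℝ] ℝ :=
    LinearMap.mkContinuous
      { toFun := fun X => X i j
        map_add' := fun X Y => rfl
        map_smul' := fun c X => rfl } 1
      (fun X => by rw [one_mul]; exact hentry X)
  have htsum : (∑' k : ℕ, B ^ k) i j = ∑' k : ℕ, (B ^ k) i j := φ.map_tsum hs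
  have hs' : Summable (fun k : ℕ => (B ^ k) i j) := by
    have := hs.map φ.toLinearMap.toAddMonoidHom φ.continuous
    exact this
  have hval : (1 + L)⁻¹ i j = (∑' k : ℕ, (B ^ k) i j) * (1 + d j)⁻¹ := by
    rw [hinv, Matrix.mul_diagonal, htsum]
  have hiff : (0 < ∑' k : ℕ, (B ^ k) i j) ↔ ∃ k : ℕ, 0 < (B ^ k) i j := by
    constructor
    · intro h
      by_contra hc
      push_neg at hc
      have hz : ∀ k : ℕ, (B ^ k) i j = 0 := fun k => le_antisymm (hc k) ((hpow k).1 i j)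
      rw [tsum_congr hz, tsum_zero] at h
      exact lt_irrefl _ h
    · rintro ⟨k, hk⟩
      exact Summable.tsum_pos hs' (fun k => (hpow k).1 i j) k hk
  have hAiff : (∃ k : ℕ, 0 < (B ^ k) i j) ↔ ∃ k : ℕ, 0 < (A ^ k) i j :=
    exists_congr fun k => (hpow k).2.2 i j
  constructor
  · rw [hval, mul_pos_iff_of_pos_right (inv_pos.2 (hm j)), hiff, hAiff]
  · intro hne
    rw [hval]
    have : ∀ k : ℕ, (B ^ k) i j = 0 := by
      intro k
      by_contra hc
      exact hne ⟨k, ((hpow k).2.2 i j).mp (lt_of_le_of_ne ((hpow k).1 i j) (Ne.symm hc))⟩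
    rw [tsum_congr this, tsum_zero, zero_mul]
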